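/- Let δ, p, q, α be real numbers with 0<δ<1, 2≤p<q and q<α+1, let X>0, Y≥0, A>0, λ>0 and B∈ℝ be reals, and define σ(t)=X·t^{p−1−α}+Y·t^{q−1−α}−A·t^{−α−δ} and φ(t)=(X/p)·t^p+(Y/q)·t^q−(A/(1−δ))·t^{1−δ}−(λB/(α+1))·t^{α+1} for t>0. Then φ′(t)=t^{α}·(σ(t)−λ·B) for every t>0. Moreover, if σ(1)=λ·B and σ′(1)>0, then 1<t_max (where t_max is the unique critical point of σ), σ(t)<λ·B for every t∈(0,1), and consequently φ′(t)<0 for every t∈(0,1), so φ is strictly decreasing on (0,1]. -/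

import Mathlib

open Filter Set

/-- the fibering map
`φ(t) = (X/p)·t^p + (Y/q)·t^q − (A/(1−δ))·t^{1−δ} − (λB/(α+1))·t^{α+1}`
satisfies `φ′(t) = t^α·(σ(t) − λB)` for every `t > 0`, where
`σ(t) = X·t^{p−1−α} + Y·t^{q−1−α} − A·t^{−α−δ}`.  Moreover, if `σ(1) = λB`
and `σ′(1) > 0`, then `1 < t_max` (the unique critical point of `σ`),
`σ(t) < λB` for `t ∈ (0,1)`, hence `φ′(t) < 0` on `(0,1)` and `φ` is
strictly decreasing on `(0,1]`. -/
theorem statement16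
    (δ p q α X Y A lam B : ℝ)
    (hδ0 : 0 < δ) (hδ1 : δ < 1)
    (hp : 2 ≤ p) (hpq : p < q) (hq : q < α + 1)
    (hX : 0 < X) (hY : 0 ≤ Y) (hA : 0 < A) (hlam : 0 < lam)
    (σ φ : ℝ → ℝ)
    (hσ : ∀ t : ℝ, σ t = X * t ^ (p - 1 - α) + Y * t ^ (q - 1 - α)
        - A * t ^ (-α - δ))
    (hφ : ∀ t : ℝ, φ t = (X / p) * t ^ p + (Y / q) * t ^ q
        - (A / (1 - δ)) * t ^ (1 - δ)
        - (lam * B / (α + 1)) * t ^ (α + 1)) :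
    (∀ t : ℝ, 0 < t → HasDerivAt φ (t ^ α * (σ t - lam * B)) t) ∧
    (σ 1 = lam * B → 0 < deriv σ 1 →
      ∀ tmax : ℝ, 0 < tmax →
        (α + 1 - p) * X * tmax ^ (p - 1 + δ)
          + (α + 1 - q) * Y * tmax ^ (q - 1 + δ) = (α + δ) * A →
        1 < tmax ∧
        (∀ t : ℝ, 0 < t → t < 1 → σ t < lam * B) ∧
        (∀ t : ℝ, 0 < t → t < 1 → deriv φ t < 0) ∧
        StrictAntiOn φ (Set.Ioc 0 1)) := by
  have hp0 : p ≠ 0 := ne_of_gt (by linarith)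
  have hq0 : q ≠ 0 := ne_of_gt (by linarith)
  have hδ' : (1:ℝ) - δ ≠ 0 := by linarith
  have hα1 : α + 1 ≠ 0 := ne_of_gt (by linarith)
  have hφeq : φ = fun t : ℝ => (X / p) * t ^ p + (Y / q) * t ^ q
      - (A / (1 - δ)) * t ^ (1 - δ) - (lam * B / (α + 1)) * t ^ (α + 1) :=
    funext hφ
  have hσeq : σ = fun t : ℝ => X * t ^ (p - 1 - α) + Y * t ^ (q - 1 - α)
      - A * t ^ (-α - δ) := funext hσ
  -- derivative of φ
  have hφ' : ∀ t : ℝ, 0 < t → HasDerivAt φ (t ^ α * (σ t - lam * B)) t := by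
    intro t ht
    have ht' : t ≠ 0 := ne_of_gt ht
    have h1 : HasDerivAt (fun t : ℝ => (X / p) * t ^ p + (Y / q) * t ^ q
        - (A / (1 - δ)) * t ^ (1 - δ) - (lam * B / (α + 1)) * t ^ (α + 1))
        ((X / p) * (p * t ^ (p - 1)) + (Y / q) * (q * t ^ (q - 1))
          - (A / (1 - δ)) * ((1 - δ) * t ^ (1 - δ - 1))
          - (lam * B / (α + 1)) * ((α + 1) * t ^ (α + 1 - 1))) t := by
      exact ((((Real.hasDerivAt_rpow_const (p := p) (Or.inl ht')).const_mul _).add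
        ((Real.hasDerivAt_rpow_const (p := q) (Or.inl ht')).const_mul _)).sub
        ((Real.hasDerivAt_rpow_const (p := 1 - δ) (Or.inl ht')).const_mul _)).sub
        ((Real.hasDerivAt_rpow_const (p := α + 1) (Or.inl ht')).const_mul _)
    rw [hφeq]
    convert h1 using 1
    rw [hσ t]
    have e1 : t ^ α * t ^ (p - 1 - α) = t ^ (p - 1) := by
      rw [← Real.rpow_add ht]; ring_nf
    have e2 : t ^ α * t ^ (q - 1 - α) = t ^ (q - 1) := by
      rw [← Real.rpow_add ht]; ring_nf
    have e3 : t ^ α * t ^ (-α - δ) = t ^ (1 - δ - 1) := by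
      rw [← Real.rpow_add ht]; ring_nf
    have e4 : t ^ (α + 1 - 1) = t ^ α := by norm_num
    have d1 : X / p * (p * t ^ (p - 1)) = X * t ^ (p - 1) := by field_simp
    have d2 : Y / q * (q * t ^ (q - 1)) = Y * t ^ (q - 1) := by field_simp
    have d3 : A / (1 - δ) * ((1 - δ) * t ^ (1 - δ - 1)) = A * t ^ (1 - δ - 1) := by
      field_simp
    have d4 : lam * B / (α + 1) * ((α + 1) * t ^ (α + 1 - 1)) = lam * B * t ^ α := by
      rw [e4]; field_simp
    rw [d1, d2, d3, d4]
    linear_combination X * e1 + Y * e2 - A * e3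
  refine ⟨hφ', ?_⟩
  intro hσ1 hd tmax htm heq
  -- derivative of σ
  have hσ' : ∀ t : ℝ, 0 < t → HasDerivAt σ
      (X * ((p - 1 - α) * t ^ (p - 1 - α - 1)) + Y * ((q - 1 - α) * t ^ (q - 1 - α - 1))
        - A * ((-α - δ) * t ^ (-α - δ - 1))) t := by
    intro t ht
    have ht' : t ≠ 0 := ne_of_gt ht
    rw [hσeq]
    exact (((Real.hasDerivAt_rpow_const (p := p - 1 - α) (Or.inl ht')).const_mul _).add
      ((Real.hasDerivAt_rpow_const (p := q - 1 - α) (Or.inl ht')).const_mul _)).sub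
      ((Real.hasDerivAt_rpow_const (p := -α - δ) (Or.inl ht')).const_mul _)
  have hd1 : deriv σ 1 = X * (p - 1 - α) + Y * (q - 1 - α) - A * (-α - δ) := by
    rw [(hσ' 1 one_pos).deriv]
    simp [Real.one_rpow]
  rw [hd1] at hd
  -- 1 < tmax
  have htm1 : 1 < tmax := by
    by_contra h
    push_neg at h
    have e1 : tmax ^ (p - 1 + δ) ≤ 1 :=
      Real.rpow_le_one htm.le h (by linarith)
    have e2 : tmax ^ (q - 1 + δ) ≤ 1 :=
      Real.rpow_le_one htm.le h (by linarith)
    have c1 : 0 < α + 1 - p := by linarith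
    have c2 : 0 < α + 1 - q := by linarith
    have p1 : (0:ℝ) < tmax ^ (p - 1 + δ) := Real.rpow_pos_of_pos htm _
    have p2 : (0:ℝ) < tmax ^ (q - 1 + δ) := Real.rpow_pos_of_pos htm _
    nlinarith [mul_le_mul_of_nonneg_left e1 (le_of_lt (mul_pos c1 hX)),
      mul_le_mul_of_nonneg_left e2 (mul_nonneg c2.le hY)]
  -- deriv σ positive on (0,1)
  have hderivσpos : ∀ t : ℝ, 0 < t → t < 1 → 0 < deriv σ t := by
    intro t ht ht1
    rw [(hσ' t ht).deriv]
    have e1 : t ^ (p - 1 - α - 1) = t ^ (p - 1 + δ) * t ^ (-α - δ - 1) := by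
      rw [← Real.rpow_add ht]; ring_nf
    have e2 : t ^ (q - 1 - α - 1) = t ^ (q - 1 + δ) * t ^ (-α - δ - 1) := by
      rw [← Real.rpow_add ht]; ring_nf
    rw [e1, e2]
    have htt : t < tmax := by linarith
    have f1 : t ^ (p - 1 + δ) < tmax ^ (p - 1 + δ) :=
      Real.rpow_lt_rpow ht.le htt (by linarith)
    have f2 : t ^ (q - 1 + δ) ≤ tmax ^ (q - 1 + δ) :=
      Real.rpow_le_rpow ht.le htt.le (by linarith)
    have c1 : 0 < α + 1 - p := by linarith
    have c2 : 0 < α + 1 - q := by linarith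
    have p0 : (0:ℝ) < t ^ (-α - δ - 1) := Real.rpow_pos_of_pos ht _
    have key : X * ((p - 1 - α) * t ^ (p - 1 + δ)) + Y * ((q - 1 - α) * t ^ (q - 1 + δ))
        - A * (-α - δ) > 0 := by
      nlinarith [mul_lt_mul_of_pos_left f1 (mul_pos c1 hX),
        mul_le_mul_of_nonneg_left f2 (mul_nonneg c2.le hY)]
    calc (0:ℝ) < (X * ((p - 1 - α) * t ^ (p - 1 + δ)) + Y * ((q - 1 - α) * t ^ (q - 1 + δ))
        - A * (-α - δ)) * t ^ (-α - δ - 1) := mul_pos key p0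
      _ = X * ((p - 1 - α) * (t ^ (p - 1 + δ) * t ^ (-α - δ - 1)))
          + Y * ((q - 1 - α) * (t ^ (q - 1 + δ) * t ^ (-α - δ - 1)))
          - A * ((-α - δ) * t ^ (-α - δ - 1)) := by ring
  -- σ strictly monotone on (0,1]
  have hmono : StrictMonoOn σ (Set.Ioc 0 1) := by
    apply strictMonoOn_of_deriv_pos (convex_Ioc 0 1)
    · exact fun t ht => ((hσ' t ht.1).continuousAt).continuousWithinAt
    · intro t ht
      rw [interior_Ioc] at ht
      exact hderivσpos t ht.1 ht.2
  have hσlt : ∀ t : ℝ, 0 < t → t < 1 → σ t < lam * B := by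
    intro t ht ht1
    have := hmono ⟨ht, ht1.le⟩ ⟨one_pos, le_refl 1⟩ ht1
    linarith [hσ1 ▸ this]
  have hφderiv : ∀ t : ℝ, 0 < t → t < 1 → deriv φ t < 0 := by
    intro t ht ht1
    rw [(hφ' t ht).deriv]
    exact mul_neg_of_pos_of_neg (Real.rpow_pos_of_pos ht _) (by linarith [hσlt t ht ht1])
  refine ⟨htm1, hσlt, hφderiv, ?_⟩
  apply strictAntiOn_of_deriv_neg (convex_Ioc 0 1)
  · exact fun t ht => ((hφ' t ht.1).continuousAt).continuousWithinAt
  · intro t ht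
    rw [interior_Ioc] at ht
    exact hφderiv t ht.1 ht.2
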